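/- For every k ≥ 1 and every n ≥ 2k + 3, the full automorphism group of the circulant graph Circ(n, {1, 2, …, k}) is isomorphic to the dihedral group of order 2n. -/

import Mathlib

namespace NutPaper

open Matrix

variable {V : Type*}

open scoped Classical in
/-- The real adjacency matrix of a simple graph. -/
noncomputable def adjMat (G : SimpleGraph V) : Matrix V V ℝ :=
  Matrix.of fun u v => if G.Adj u v then (1 : ℝ) else 0

/-- A nut graph: the adjacency matrix has nullity exactly one, and every
nonzero kernel vector has all entries nonzero. -/
def IsNutGraph [Fintype V] (G : SimpleGraph V) : Prop :=
  Module.finrank ℝ (LinearMap.ker (Matrix.mulVecLin (adjMat G))) = 1 ∧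
  ∀ x : V → ℝ, adjMat G *ᵥ x = 0 → x ≠ 0 → ∀ v, x v ≠ 0

/-- The orbit of a vertex under the full automorphism group. -/
def vertexOrbit (G : SimpleGraph V) (v : V) : Set V :=
  {u | ∃ α : G ≃g G, α v = u}

/-- The set of vertex orbits. -/
def vertexOrbits (G : SimpleGraph V) : Set (Set V) :=
  Set.range (vertexOrbit G)

/-- The number of vertex orbits. -/
noncomputable def numVertexOrbits (G : SimpleGraph V) : ℕ :=
  Nat.card (vertexOrbits G)

/-- The orbit of an edge under the full automorphism group. -/
def edgeOrbit (G : SimpleGraph V) (e : Sym2 V) : Set (Sym2 V) :=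
  {f | ∃ α : G ≃g G, Sym2.map (⇑α) e = f}

/-- The set of edge orbits. -/
def edgeOrbits (G : SimpleGraph V) : Set (Set (Sym2 V)) :=
  edgeOrbit G '' G.edgeSet

/-- The number of edge orbits. -/
noncomputable def numEdgeOrbits (G : SimpleGraph V) : ℕ :=
  Nat.card (edgeOrbits G)


/-- The full automorphism group of a simple graph `G`, as a subgroup of the
permutation group of its vertex set. -/
def autGroup (G : SimpleGraph V) : Subgroup (Equiv.Perm V) where
  carrier := {π | ∀ u v : V, G.Adj (π u) (π v) ↔ G.Adj u v}
  one_mem' := by intro u v; simp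
  mul_mem' := by
    intro a b ha hb u v
    simpa [Equiv.Perm.mul_apply] using (ha (b u) (b v)).trans (hb u v)
  inv_mem' := by
    intro a ha u v
    simpa using (ha (a⁻¹ u) (a⁻¹ v)).symm

/-! ### Auxiliary material for the circulant-graph automorphism theorem -/

section CirculantAux

open Finset

/-- The arithmetic predicate describing adjacency to `0` in `Circ(n, {1,…,k})`
in terms of `ZMod.val`. -/
def Bp (n k m : ℕ) : Prop := (1 ≤ m ∧ m ≤ k) ∨ (n - k ≤ m ∧ m ≤ n - 1)

instance (n k m : ℕ) : Decidable (Bp n k m) := by unfold Bp; infer_instance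

/-- The circulant graph `Circ(n, {1,…,k})`. -/
abbrev CG (n k : ℕ) : SimpleGraph (ZMod n) :=
  SimpleGraph.circulantGraph ((fun j : ℕ => (j : ZMod n)) '' Set.Icc 1 k)

lemma val_neg' {n : ℕ} [NeZero n] {x : ZMod n} (hx : x ≠ 0) : (-x).val = n - x.val := by
  haveI : NeZero x := ⟨hx⟩
  exact ZMod.val_neg_of_ne_zero x

lemma mod_helper {n k e m : ℕ} (hn : 2*k+3 ≤ n) (hm : m < n) (he : e ≤ k) :
    (m + (n - e)) % n = if e ≤ m then m - e else m + n - e := by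
  split_ifs with h
  · have h1 : m + (n - e) = (m - e) + n := by omega
    rw [h1, Nat.add_mod_right, Nat.mod_eq_of_lt (by omega)]
  · rw [Nat.mod_eq_of_lt (by omega)]
    omega

/-- The number of common neighbours of two vertices at circular distance `1`. -/
lemma Ncnt_one {n k : ℕ} (hk : 1 ≤ k) (hn : 2*k+3 ≤ n) :
    ((Finset.range n).filter (fun m => Bp n k m ∧ Bp n k ((m + (n - 1)) % n))).card
      = 2*k - 2 := by
  have hset : ((Finset.range n).filter (fun m => Bp n k m ∧ Bp n k ((m + (n - 1)) % n)))
      = Finset.Icc 2 k ∪ Finset.Icc (n-k+1) (n-1) := by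
    ext m
    simp only [mem_filter, mem_range, mem_union, mem_Icc]
    constructor
    · rintro ⟨hm, h1, h2⟩
      rw [mod_helper hn hm hk] at h2
      unfold Bp at h1 h2
      split_ifs at h2 <;> omega
    · intro h
      have hm : m < n := by omega
      refine ⟨hm, ?_, ?_⟩
      · unfold Bp; omega
      · rw [mod_helper hn hm hk]
        unfold Bp
        split_ifs <;> omega
  rw [hset, Finset.card_union_of_disjoint, Nat.card_Icc, Nat.card_Icc]
  · omega
  · rw [Finset.disjoint_left]
    intro a ha hb
    simp only [mem_Icc] at ha hb
    omega

/-- Bound on the number of common neighbours of two adjacent vertices at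
circular distance at least `2`. -/
lemma Ncnt_big {n k e : ℕ} (hn : 2*k+3 ≤ n) (he2 : 2 ≤ e) (hek : e ≤ k) :
    ((Finset.range n).filter (fun m => Bp n k m ∧ Bp n k ((m + (n - e)) % n))).card
      ≤ 2*k - 3 := by
  have hsub : ((Finset.range n).filter (fun m => Bp n k m ∧ Bp n k ((m + (n - e)) % n)))
      ⊆ ((Finset.Icc 1 (e-1) ∪ Finset.Icc (e+1) k) ∪
          (Finset.Icc (n-k+e) (n-1) ∪ Finset.Icc (n-k) (k+e))) := by
    intro m hm
    simp only [mem_filter, mem_range] at hm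
    obtain ⟨hmn, h1, h2⟩ := hm
    rw [mod_helper hn hmn hek] at h2
    simp only [mem_union, mem_Icc]
    unfold Bp at h1 h2
    split_ifs at h2 <;> omega
  calc _ ≤ _ := Finset.card_le_card hsub
    _ ≤ (Finset.Icc 1 (e-1) ∪ Finset.Icc (e+1) k).card
        + (Finset.Icc (n-k+e) (n-1) ∪ Finset.Icc (n-k) (k+e)).card := Finset.card_union_le _ _
    _ ≤ ((Finset.Icc 1 (e-1)).card + (Finset.Icc (e+1) k).card)
        + ((Finset.Icc (n-k+e) (n-1)).card + (Finset.Icc (n-k) (k+e)).card) := by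
          gcongr <;> exact Finset.card_union_le _ _
    _ ≤ 2*k - 3 := by
          simp only [Nat.card_Icc]; omega

lemma mem_S_iff {n k : ℕ} (hkn : k < n) {x : ZMod n} :
    x ∈ (fun j : ℕ => (j : ZMod n)) '' Set.Icc 1 k ↔ 1 ≤ x.val ∧ x.val ≤ k := by
  haveI : NeZero n := ⟨by omega⟩
  constructor
  · rintro ⟨j, ⟨h1, h2⟩, rfl⟩
    rw [ZMod.val_cast_of_lt (by omega)]; exact ⟨h1, h2⟩
  · rintro ⟨h1, h2⟩
    exact ⟨x.val, ⟨h1, h2⟩, ZMod.natCast_rightInverse x⟩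

/-- Adjacency in `Circ(n, {1,…,k})` in terms of `ZMod.val`. -/
lemma adj_iff {n k : ℕ} (hk : 1 ≤ k) (hn : 2*k+3 ≤ n) {u v : ZMod n} :
    (CG n k).Adj u v ↔ Bp n k ((v - u).val) := by
  haveI : NeZero n := ⟨by omega⟩
  rw [SimpleGraph.circulantGraph_adj]
  rw [mem_S_iff (by omega), mem_S_iff (by omega)]
  unfold Bp
  constructor
  · rintro ⟨hne, h | h⟩
    · have hvu : v - u ≠ 0 := sub_ne_zero.mpr (Ne.symm hne)
      have huv : u - v = -(v - u) := by ring
      rw [huv, val_neg' hvu] at h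
      have := ZMod.val_lt (v - u)
      omega
    · exact Or.inl h
  · intro h
    have h1 : (v - u).val ≠ 0 := by
      have := ZMod.val_lt (v - u); omega
    have hvu : v - u ≠ 0 := fun hh => h1 (by rw [hh]; simp)
    have hne : u ≠ v := fun hh => hvu (by rw [hh]; ring)
    refine ⟨hne, ?_⟩
    rcases h with h | h
    · exact Or.inr h
    · left
      have huv : u - v = -(v - u) := by ring
      rw [huv, val_neg' hvu]
      have := ZMod.val_lt (v - u)
      omega

open scoped Classical in
/-- The number of common neighbours of two vertices. -/
noncomputable def codeg (n k : ℕ) [NeZero n] (u v : ZMod n) : ℕ :=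
  (Finset.univ.filter (fun w => (CG n k).Adj u w ∧ (CG n k).Adj v w)).card

lemma codeg_comm (n k : ℕ) [NeZero n] (u v : ZMod n) : codeg n k u v = codeg n k v u := by
  unfold codeg
  congr 1
  ext w
  simp only [Finset.mem_filter]
  tauto

lemma sub_val_helper {n : ℕ} [NeZero n] (u v w : ZMod n) :
    (w - v).val = ((w - u).val + (n - (v - u).val)) % n := by
  by_cases hd : v = u
  · subst hd
    simp only [sub_self, ZMod.val_zero, Nat.sub_zero, Nat.add_mod_right]
    exact (Nat.mod_eq_of_lt (ZMod.val_lt _)).symm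
  · have h1 : w - v = (w - u) + (-(v - u)) := by ring
    rw [h1, ZMod.val_add, val_neg' (sub_ne_zero.mpr hd)]

/-- The codegree of `u` and `v` as a purely arithmetic count. -/
lemma codeg_eq (n k : ℕ) [NeZero n] (hk : 1 ≤ k) (hn : 2*k+3 ≤ n) (u v : ZMod n) :
    codeg n k u v =
      ((Finset.range n).filter
        (fun m => Bp n k m ∧ Bp n k ((m + (n - (v - u).val)) % n))).card := by
  unfold codeg
  apply Finset.card_nbij' (fun w => (w - u).val) (fun m => u + (m : ZMod n))
  · intro w hw
    simp only [Finset.mem_coe, Finset.mem_filter, Finset.mem_univ, true_and] at hw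
    simp only [Finset.mem_coe, Finset.mem_filter, Finset.mem_range]
    refine ⟨ZMod.val_lt _, ?_, ?_⟩
    · exact (adj_iff hk hn).mp hw.1
    · rw [← sub_val_helper u v w]
      exact (adj_iff hk hn).mp hw.2
  · intro m hm
    simp only [Finset.mem_coe, Finset.mem_filter, Finset.mem_range] at hm
    simp only [Finset.mem_coe, Finset.mem_filter, Finset.mem_univ, true_and]
    have hval : (u + (m : ZMod n) - u).val = m := by
      rw [show u + (m : ZMod n) - u = (m : ZMod n) by ring, ZMod.val_cast_of_lt hm.1]
    constructor
    · rw [adj_iff hk hn, hval]; exact hm.2.1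
    · rw [adj_iff hk hn, sub_val_helper u v _, hval]; exact hm.2.2
  · intro w _
    show u + (((w - u).val : ℕ) : ZMod n) = w
    rw [ZMod.natCast_rightInverse (w - u)]
    ring
  · intro m hm
    simp only [Finset.mem_coe, Finset.mem_filter, Finset.mem_range] at hm
    show (u + (m : ZMod n) - u).val = m
    rw [show u + (m : ZMod n) - u = (m : ZMod n) by ring, ZMod.val_cast_of_lt hm.1]

/-- The codegree is invariant under graph automorphisms. -/
lemma codeg_aut (n k : ℕ) [NeZero n] (π : Equiv.Perm (ZMod n))
    (hπ : ∀ a b, (CG n k).Adj (π a) (π b) ↔ (CG n k).Adj a b) (u v : ZMod n) :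
    codeg n k (π u) (π v) = codeg n k u v := by
  unfold codeg
  apply Finset.card_nbij' (fun w => π.symm w) (fun w => π w)
  · intro w hw
    simp only [Finset.mem_coe, Finset.mem_filter, Finset.mem_univ, true_and] at hw ⊢
    constructor
    · rw [← hπ u (π.symm w)]
      simpa using hw.1
    · rw [← hπ v (π.symm w)]
      simpa using hw.2
  · intro w hw
    simp only [Finset.mem_coe, Finset.mem_filter, Finset.mem_univ, true_and] at hw ⊢
    exact ⟨(hπ u w).mpr hw.1, (hπ v w).mpr hw.2⟩
  · intro w _; simp
  · intro w _; simp

lemma val_one' {n k : ℕ} (hk : 1 ≤ k) (hn : 2*k+3 ≤ n) : (1 : ZMod n).val = 1 := by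
  haveI : NeZero n := ⟨by omega⟩
  rw [← Nat.cast_one, ZMod.val_cast_of_lt (by omega)]

/-- Two vertices are at circular distance `1` iff they are adjacent with
codegree `2k - 2`. -/
lemma dist_one {n k : ℕ} [NeZero n] (hk : 1 ≤ k) (hn : 2*k+3 ≤ n) {u v : ZMod n} :
    ((CG n k).Adj u v ∧ codeg n k u v = 2*k-2) ↔ (v - u = 1 ∨ v - u = -1) := by
  constructor
  · rintro ⟨hadj, hcd⟩
    rw [adj_iff hk hn] at hadj
    rcases hadj with h | h
    · rcases Nat.lt_or_ge ((v - u).val) 2 with he | he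
      · left
        have h1 : (v - u).val = 1 := by omega
        have h2 := ZMod.natCast_rightInverse (v - u)
        rw [h1] at h2
        simpa using h2.symm
      · exfalso
        rw [codeg_eq n k hk hn u v] at hcd
        have := Ncnt_big (e := (v - u).val) hn he h.2
        omega
    · right
      have hvu : v - u ≠ 0 := by
        intro hh; rw [hh] at h; simp at h; omega
      have huv : (u - v).val = n - (v - u).val := by
        rw [show u - v = -(v - u) by ring, val_neg' hvu]
      have hcd' : codeg n k v u = 2*k-2 := by rw [codeg_comm]; exact hcd
      rw [codeg_eq n k hk hn v u, huv] at hcd'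
      have he : n - (v - u).val ≤ k := by
        have := ZMod.val_lt (v - u); omega
      rcases Nat.lt_or_ge (n - (v - u).val) 2 with h2 | h2
      · have h1 : (v - u).val = n - 1 := by omega
        have h3 := ZMod.natCast_rightInverse (v - u)
        rw [h1] at h3
        rw [← h3]
        have h4 : ((n - 1 : ℕ) : ZMod n) = -1 := by
          have hcast : ((n : ℕ) : ZMod n) = 0 := ZMod.natCast_self n
          push_cast [Nat.cast_sub (show 1 ≤ n by omega)]
          rw [hcast]; ring
        rw [h4]
      · exfalso
        have := Ncnt_big (e := n - (v - u).val) hn h2 he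
        omega
  · intro h
    have key : ∀ a b : ZMod n, b - a = 1 →
        (CG n k).Adj a b ∧ codeg n k a b = 2*k-2 := by
      intro a b hab
      constructor
      · rw [adj_iff hk hn, hab, val_one' hk hn]
        unfold Bp; omega
      · rw [codeg_eq n k hk hn a b, hab, val_one' hk hn]
        exact Ncnt_one hk hn
    rcases h with h | h
    · exact key u v h
    · have h' : u - v = 1 := by rw [show u - v = -(v - u) by ring, h]; ring
      obtain ⟨ha, hc⟩ := key v u h'
      exact ⟨ha.symm, by rw [codeg_comm]; exact hc⟩

/-- Rigidity: every automorphism of `Circ(n, {1,…,k})` is a rotation or a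
reflection. -/
lemma rigid {n k : ℕ} [NeZero n] (hk : 1 ≤ k) (hn : 2*k+3 ≤ n)
    (π : Equiv.Perm (ZMod n))
    (hπ : ∀ a b, (CG n k).Adj (π a) (π b) ↔ (CG n k).Adj a b) :
    (∀ x, π x = x + π 0) ∨ (∀ x, π x = π 0 - x) := by
  have step : ∀ u : ZMod n, π (u + 1) - π u = 1 ∨ π (u + 1) - π u = -1 := by
    intro u
    have h1 : (CG n k).Adj u (u+1) ∧ codeg n k u (u+1) = 2*k-2 :=
      (dist_one hk hn).mpr (Or.inl (by ring))
    have h2 : (CG n k).Adj (π u) (π (u+1)) ∧ codeg n k (π u) (π (u+1)) = 2*k-2 :=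
      ⟨(hπ _ _).mpr h1.1, by rw [codeg_aut n k π hπ]; exact h1.2⟩
    exact (dist_one hk hn).mp h2
  have two_ne : (2 : ZMod n) ≠ 0 := by
    intro h
    have h1 : ((2:ℕ) : ZMod n) = ((0:ℕ) : ZMod n) := by push_cast; exact h
    have h2 := congrArg ZMod.val h1
    rw [ZMod.val_cast_of_lt (show 2 < n by omega),
        ZMod.val_cast_of_lt (show 0 < n by omega)] at h2
    omega
  have hε1 : π 1 - π 0 = 1 ∨ π 1 - π 0 = -1 := by
    have := step 0; rw [zero_add] at this; exact this
  have key : ∀ ε : ZMod n, π 1 - π 0 = ε → (ε = 1 ∨ ε = -1) →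
      ∀ m : ℕ, π (m : ZMod n) = π 0 + (m : ZMod n) * ε ∧
        π ((m : ZMod n) + 1) = π 0 + ((m : ZMod n) + 1) * ε := by
    intro ε hεdef hεval m
    induction m with
    | zero =>
      constructor
      · push_cast; ring_nf
      · push_cast; rw [zero_add, one_mul]; linear_combination hεdef
    | succ m ih =>
      constructor
      · push_cast
        exact ih.2
      · push_cast
        rcases step ((m : ZMod n) + 1) with hδ | hδ <;> rcases hεval with he | he
        · linear_combination hδ + ih.2 - he
        · exfalso
          have hcontra : π ((m : ZMod n) + 1 + 1) = π ((m : ZMod n)) := by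
            linear_combination hδ + ih.2 - ih.1 + he
          have h2 := π.injective hcontra
          exact two_ne (by linear_combination h2)
        · exfalso
          have hcontra : π ((m : ZMod n) + 1 + 1) = π ((m : ZMod n)) := by
            linear_combination hδ + ih.2 - ih.1 + he
          have h2 := π.injective hcontra
          exact two_ne (by linear_combination h2)
        · linear_combination hδ + ih.2 - he
  rcases hε1 with he | he
  · left
    intro x
    have hx := (key 1 he (Or.inl rfl) x.val).1
    rw [ZMod.natCast_rightInverse x] at hx
    rw [hx]; ring
  · right
    intro x
    have hx := (key (-1) he (Or.inr rfl) x.val).1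
    rw [ZMod.natCast_rightInverse x] at hx
    rw [hx]; ring

/-- Congruence of circulant adjacency along maps preserving differences up to
sign. -/
lemma adj_diff {n k : ℕ} {x y x' y' : ZMod n}
    (h : x' - y' = x - y ∨ x' - y' = y - x) :
    (CG n k).Adj x' y' ↔ (CG n k).Adj x y := by
  rw [SimpleGraph.circulantGraph_adj, SimpleGraph.circulantGraph_adj]
  rcases h with h | h
  · have e1 : (x' = y') ↔ (x = y) := by
      rw [← sub_eq_zero, ← sub_eq_zero (a := x), h]
    have e2 : y' - x' = y - x := by linear_combination -h
    rw [h, e2, e1]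
  · have e1 : (x' = y') ↔ (x = y) := by
      rw [← sub_eq_zero, ← sub_eq_zero (a := x), h]
      constructor
      · intro hh; linear_combination -hh
      · intro hh; linear_combination -hh
    have e2 : y' - x' = x - y := by linear_combination -h
    rw [h, e2, e1, or_comm]

/-- The permutation of `ZMod n` attached to a dihedral group element. -/
def dihPerm {n : ℕ} : DihedralGroup n → Equiv.Perm (ZMod n)
  | .r i => Equiv.subRight i
  | .sr i => Equiv.subLeft i

lemma dihPerm_mem (n k : ℕ) (g : DihedralGroup n) : dihPerm g ∈ autGroup (CG n k) := by
  show ∀ u v : ZMod n, (CG n k).Adj (dihPerm g u) (dihPerm g v) ↔ (CG n k).Adj u v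
  cases g with
  | r i =>
    intro u v
    exact adj_diff (Or.inl (by simp [dihPerm]))
  | sr i =>
    intro u v
    exact adj_diff (Or.inr (by simp [dihPerm]))

/-- The canonical homomorphism from the dihedral group into the automorphism
group of `Circ(n, {1,…,k})`. -/
def dihHom (n k : ℕ) : DihedralGroup n →* autGroup (CG n k) where
  toFun g := ⟨dihPerm g, dihPerm_mem n k g⟩
  map_one' := by
    apply Subtype.ext
    show dihPerm (DihedralGroup.r 0) = 1
    ext x
    simp [dihPerm]
  map_mul' := by
    rintro (i | i) (j | j) <;>
    · apply Subtype.ext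
      ext x
      simp [dihPerm, Equiv.Perm.mul_apply]
      ring

end CirculantAux

/-- For every `k ≥ 1` and every `n ≥ 2k + 3`, the full
automorphism group of the circulant graph `Circ(n, {1, …, k})` is isomorphic
to the dihedral group of order `2n`. -/
theorem autGroup_circulant_eq_dihedral (k n : ℕ) (hk : 1 ≤ k)
    (hn : 2 * k + 3 ≤ n) :
    Nonempty
      (autGroup (SimpleGraph.circulantGraph
          ((fun j : ℕ => (j : ZMod n)) '' Set.Icc 1 k)) ≃* DihedralGroup n) := by
  haveI : NeZero n := ⟨by omega⟩
  have hinj : Function.Injective (dihHom n k) := by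
    rw [injective_iff_map_eq_one]
    rintro (i | i) h
    · have h1 : dihPerm (DihedralGroup.r i) = 1 := congrArg Subtype.val h
      have h2 : (0 : ZMod n) - i = 0 := by
        calc (0 : ZMod n) - i = dihPerm (DihedralGroup.r i) 0 := by simp [dihPerm]
          _ = (1 : Equiv.Perm (ZMod n)) 0 := by rw [h1]
          _ = 0 := rfl
      have h3 : i = 0 := by linear_combination -h2
      rw [h3]
      rfl
    · exfalso
      have h1 : dihPerm (DihedralGroup.sr i) = 1 := congrArg Subtype.val h
      have h2 : i - (0 : ZMod n) = 0 := by
        calc i - (0 : ZMod n) = dihPerm (DihedralGroup.sr i) 0 := by simp [dihPerm]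
          _ = (1 : Equiv.Perm (ZMod n)) 0 := by rw [h1]
          _ = 0 := rfl
      have h3 : i - (1 : ZMod n) = 1 := by
        calc i - (1 : ZMod n) = dihPerm (DihedralGroup.sr i) 1 := by simp [dihPerm]
          _ = (1 : Equiv.Perm (ZMod n)) 1 := by rw [h1]
          _ = 1 := rfl
      have two_ne : (2 : ZMod n) ≠ 0 := by
        intro hh
        have hc : ((2:ℕ) : ZMod n) = ((0:ℕ) : ZMod n) := by push_cast; exact hh
        have hv := congrArg ZMod.val hc
        rw [ZMod.val_cast_of_lt (show 2 < n by omega),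
            ZMod.val_cast_of_lt (show 0 < n by omega)] at hv
        omega
      exact two_ne (by linear_combination h2 - h3)
  have hsurj : Function.Surjective (dihHom n k) := by
    rintro ⟨π, hπmem⟩
    have hπ : ∀ a b : ZMod n, (CG n k).Adj (π a) (π b) ↔ (CG n k).Adj a b := hπmem
    rcases rigid hk hn π hπ with hcase | hcase
    · refine ⟨DihedralGroup.r (-(π 0)), ?_⟩
      apply Subtype.ext
      show dihPerm (DihedralGroup.r (-(π 0))) = π
      ext x
      show x - -(π 0) = π x
      rw [hcase x]; ring
    · refine ⟨DihedralGroup.sr (π 0), ?_⟩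
      apply Subtype.ext
      show dihPerm (DihedralGroup.sr (π 0)) = π
      ext x
      show π 0 - x = π x
      rw [hcase x]
  exact ⟨(MulEquiv.ofBijective (dihHom n k) ⟨hinj, hsurj⟩).symm⟩

end NutPaper
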